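/- arXiv:1602.01943 — 2 statements merged into one kernel-verified Lean document; each statement's English description precedes it below -/
import Mathlib

section
/- Let Λ = ℤ[t,t⁻¹] be the ring of Laurent polynomials over ℤ. If G is a Λ-module whose underlying abelian group is finitely generated, then Hom_Λ(G, Λ) = 0. -/
/-- Let `Λ = ℤ[t,t⁻¹]` be the ring of Laurent polynomials over `ℤ`. If `G` is a
`Λ`-module whose underlying abelian group is finitely generated, then
`Hom_Λ(G, Λ) = 0`, i.e. every `Λ`-linear map `G → Λ` is zero. -/
theorem hom_eq_zero_of_fg_as_addGroup
    (G : Type*) [AddCommGroup G] [Module (LaurentPolynomial ℤ) G]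
    (hfg : AddGroup.FG G) :
    ∀ f : G →ₗ[LaurentPolynomial ℤ] LaurentPolynomial ℤ, f = 0 := by
  intro f
  by_contra hf
  obtain ⟨g, hg⟩ : ∃ g, f g ≠ 0 := by
    by_contra h
    push_neg at h
    exact hf (LinearMap.ext h)
  -- the range of f as an additive subgroup is finitely generated
  set φ : G →+ LaurentPolynomial ℤ := f.toAddMonoidHom with hφ
  have hRfg : AddGroup.FG φ.range := AddGroup.fg_range φ
  have hR : φ.range.FG := (AddGroup.fg_iff_addSubgroup_fg φ.range).mp hRfg
  obtain ⟨T, hT⟩ := hR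
  -- all elements of the range have support inside a fixed finite set
  set S : Finset ℤ := T.sup (fun x : LaurentPolynomial ℤ => x.coeff.support) with hS
  have hsupp : ∀ x ∈ φ.range, (x.coeff.support : Set ℤ) ⊆ (S : Set ℤ) := by
    intro x hx
    rw [← hT] at hx
    induction hx using AddSubgroup.closure_induction with
    | mem y hy =>
      intro d hd
      exact_mod_cast Finset.le_sup (f := fun x : LaurentPolynomial ℤ => x.coeff.support) hy hd
    | zero => simp
    | add a b _ _ ha hb =>
      intro d hd
      have := Finsupp.support_add (g₁ := a.coeff) (g₂ := b.coeff) hd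
      rcases Finset.mem_union.mp this with h | h
      · exact ha h
      · exact hb h
    | neg a _ ha =>
      intro d hd
      rw [AddMonoidAlgebra.coeff_neg, Finsupp.support_neg] at hd
      exact ha hd
  -- pick a nonzero coefficient of f g
  obtain ⟨d, hd⟩ := Finsupp.support_nonempty_iff.mpr (mt AddMonoidAlgebra.coeff_eq_zero.mp hg)
  -- every translate n + d lies in S, so S is infinite: contradiction
  have key : ∀ n : ℤ, n + d ∈ S := by
    intro n
    have hmem : LaurentPolynomial.T n * f g ∈ φ.range := by
      refine ⟨(LaurentPolynomial.T n : LaurentPolynomial ℤ) • g, ?_⟩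
      simp [hφ, map_smul, smul_eq_mul]
    have hcoeff : (LaurentPolynomial.T n * f g : LaurentPolynomial ℤ).coeff (n + d) = (f g).coeff d := by
      rw [show (LaurentPolynomial.T n : LaurentPolynomial ℤ) = AddMonoidAlgebra.single n 1 from rfl]
      rw [AddMonoidAlgebra.coeff_single_mul_apply]
      simp
    have hne : (LaurentPolynomial.T n * f g : LaurentPolynomial ℤ).coeff (n + d) ≠ 0 := by
      rw [hcoeff]
      exact Finsupp.mem_support_iff.mp hd
    exact_mod_cast hsupp _ hmem (Finsupp.mem_support_iff.mpr hne)
  have : (S : Set ℤ).Infinite := by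
    exact Set.infinite_of_injective_forall_mem (f := fun n : ℤ => n + d)
      (fun a b hab => by simpa using hab) key
  exact this S.finite_toSet
end

section
/- Let Λ = ℤ[t,t⁻¹] and let d : C₂ → C₁ be a Λ-linear map between finitely generated free Λ-modules such that coker(d) is finitely generated as an abelian group. Then ker(d* : Hom_Λ(C₁,Λ) → Hom_Λ(C₂,Λ)) = 0. -/
lemma laurent_not_int_finite : ¬ Module.Finite ℤ (LaurentPolynomial ℤ) := by
  intro h
  have h' : Module.Finite ℤ (ℤ →₀ ℤ) :=
    Module.Finite.equiv (AddMonoidAlgebra.coeffLinearEquiv (R := ℤ) (S := ℤ) (M := ℤ))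
  have hr := Module.rank_lt_aleph0 ℤ (ℤ →₀ ℤ)
  rw [rank_finsupp_self] at hr
  simp at hr

/-- Let `Λ = ℤ[t,t⁻¹]` and let `d : C₂ → C₁` be a `Λ`-linear map between finitely
generated free `Λ`-modules such that `coker d` is finitely generated as an abelian
group.  Then the kernel of `d* : Hom_Λ(C₁,Λ) → Hom_Λ(C₂,Λ)` is zero, i.e. every
`Λ`-linear `f : C₁ → Λ` with `f ∘ d = 0` is zero. -/
theorem ker_dual_eq_zero_of_coker_fg
    (C₁ C₂ : Type*)
    [AddCommGroup C₁] [Module (LaurentPolynomial ℤ) C₁]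
    [Module.Free (LaurentPolynomial ℤ) C₁] [Module.Finite (LaurentPolynomial ℤ) C₁]
    [AddCommGroup C₂] [Module (LaurentPolynomial ℤ) C₂]
    [Module.Free (LaurentPolynomial ℤ) C₂] [Module.Finite (LaurentPolynomial ℤ) C₂]
    (d : C₂ →ₗ[LaurentPolynomial ℤ] C₁)
    (hfg : AddGroup.FG (C₁ ⧸ LinearMap.range d)) :
    ∀ f : C₁ →ₗ[LaurentPolynomial ℤ] LaurentPolynomial ℤ, f.comp d = 0 → f = 0 := by
  intro f hf
  by_contra hne
  obtain ⟨x, hx⟩ : ∃ x, f x ≠ 0 := by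
    by_contra h; push_neg at h; exact hne (LinearMap.ext h)
  have hle : LinearMap.range d ≤ LinearMap.ker f := by
    rintro y ⟨z, rfl⟩
    simpa using LinearMap.congr_fun hf z
  let g := (LinearMap.range d).liftQ f hle
  have hfin : Module.Finite ℤ (C₁ ⧸ LinearMap.range d) :=
    Module.Finite.iff_addGroup_fg.mpr hfg
  let g' := g.restrictScalars ℤ
  have hrangefin : Module.Finite ℤ (LinearMap.range g') := Module.Finite.range g'
  have hnoeth : IsNoetherian ℤ (LinearMap.range g') := inferInstance
  have key : ∀ a : LaurentPolynomial ℤ, f (a • x) ∈ LinearMap.range g' := by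
    intro a
    exact ⟨Submodule.Quotient.mk (a • x), by simp [g', g]⟩
  let e : LaurentPolynomial ℤ →ₗ[ℤ] LinearMap.range g' :=
    { toFun := fun a => ⟨f (a • x), key a⟩
      map_add' := by intro a b; ext; simp [add_smul]
      map_smul' := by intro n a; ext; simp [smul_assoc, mul_assoc] }
  have einj : Function.Injective e := by
    intro a b hab
    have h1 : f (a • x) = f (b • x) := congrArg Subtype.val hab
    have h2 : a * f x = b * f x := by simpa [smul_eq_mul] using h1
    exact mul_right_cancel₀ hx h2
  have : IsNoetherian ℤ (LaurentPolynomial ℤ) := isNoetherian_of_injective e einj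
  have : Module.Finite ℤ (LaurentPolynomial ℤ) := Module.Finite.of_injective e einj
  exact laurent_not_int_finite this
end
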